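/- Let n ≥ 3, let |GHZ_n⟩ = (|0⟩^{⊗n} + |1⟩^{⊗n})/√2, and let ρ_cl = (1/2)·(|0⟩⟨0|^{⊗n} + |1⟩⟨1|^{⊗n}). Then for all indices 0 ≤ i ≠ j ≤ n−1 and all 2×2 complex matrices P and Q: ⟨GHZ_n| P^{(i)} |GHZ_n⟩ = Tr(ρ_cl · P^{(i)}) and ⟨GHZ_n| P^{(i)} Q^{(j)} |GHZ_n⟩ = Tr(ρ_cl · P^{(i)} Q^{(j)}). In particular, the GHZ state and the classical mixture ρ_cl give the same value to every Bell operator built only from one- and two-body terms. -/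

import Mathlib

noncomputable section

open scoped ComplexConjugate

/-- Operators on `n` qubits: `2ⁿ × 2ⁿ` complex matrices indexed by bitstrings. -/
abbrev QOp (n : ℕ) := Matrix (Fin n → Fin 2) (Fin n → Fin 2) ℂ

/-- The single-qubit operator `M` acting on the `i`-th tensor factor and as the
identity on all the other factors. -/
def onQubit (n : ℕ) (i : Fin n) (M : Matrix (Fin 2) (Fin 2) ℂ) : QOp n :=
  Matrix.of fun f g =>
    M (f i) (g i) * ∏ j ∈ Finset.univ.erase i, (if f j = g j then (1 : ℂ) else 0)

/-- The collective operator `S_M = Σᵢ M⁽ⁱ⁾`. -/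
def collS (n : ℕ) (M : Matrix (Fin 2) (Fin 2) ℂ) : QOp n := ∑ i : Fin n, onQubit n i M

/-- The collective two-body operator `S_{MN} = Σ_{i≠j} M⁽ⁱ⁾ N⁽ʲ⁾`. -/
def collSS (n : ℕ) (M N : Matrix (Fin 2) (Fin 2) ℂ) : QOp n :=
  ∑ i : Fin n, ∑ j ∈ Finset.univ.erase i, onQubit n i M * onQubit n j N

def pauliX : Matrix (Fin 2) (Fin 2) ℂ := !![0, 1; 1, 0]
def pauliY : Matrix (Fin 2) (Fin 2) ℂ := !![0, -Complex.I; Complex.I, 0]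
def pauliZ : Matrix (Fin 2) (Fin 2) ℂ := !![1, 0; 0, -1]

/-- The matrix element `⟨ψ| A |φ⟩`. -/
def braket {n : ℕ} (ψ : (Fin n → Fin 2) → ℂ) (A : QOp n) (φ : (Fin n → Fin 2) → ℂ) : ℂ :=
  ∑ f : Fin n → Fin 2, ∑ g : Fin n → Fin 2, conj (ψ f) * A f g * φ g

/-- Kronecker delta `δ(a)` on the integers, valued in `ℂ`. -/
def kdel (a : ℤ) : ℂ := if a = 0 then 1 else 0

/-- The GHZ state `(|0⟩^{⊗n} + |1⟩^{⊗n})/√2`. -/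
def ghz (n : ℕ) : (Fin n → Fin 2) → ℂ := fun f =>
  (((if f = fun _ => 0 then 1 else 0) + (if f = fun _ => 1 then 1 else 0)) : ℂ)
    / ((Real.sqrt 2 : ℝ) : ℂ)

/-- The classical mixture `ρ_cl = (1/2)(|0⟩⟨0|^{⊗n} + |1⟩⟨1|^{⊗n})`. -/
def rhoCl (n : ℕ) : QOp n := Matrix.of fun f g =>
  (2 : ℂ)⁻¹ * (((if f = (fun _ => 0) ∧ g = (fun _ => 0) then 1 else 0)
    + (if f = (fun _ => 1) ∧ g = (fun _ => 1) then 1 else 0)) : ℂ)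

lemma trace_rhoCl {n : ℕ} (A : QOp n) :
    Matrix.trace (rhoCl n * A) =
      2⁻¹ * (A (fun _ => 0) (fun _ => 0) + A (fun _ => 1) (fun _ => 1)) := by
  simp [Matrix.trace, Matrix.mul_apply, Matrix.diag, rhoCl, ite_and, mul_add, add_mul,
    Finset.sum_add_distrib, ite_mul, Finset.sum_ite_eq, Finset.sum_ite_eq']


lemma braket_ghz {n : ℕ} (A : QOp n) :
    braket (ghz n) A (ghz n) =
      2⁻¹ * (A (fun _ => 0) (fun _ => 0) + A (fun _ => 0) (fun _ => 1)
        + A (fun _ => 1) (fun _ => 0) + A (fun _ => 1) (fun _ => 1)) := by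
  have h2 : ((Real.sqrt 2 : ℝ) : ℂ) * ((Real.sqrt 2 : ℝ) : ℂ) = 2 := by
    norm_cast
    exact Real.mul_self_sqrt (by norm_num)
  simp only [braket, ghz, div_eq_mul_inv, map_mul, map_add, map_inv₀, Complex.conj_ofReal,
    apply_ite (starRingEnd ℂ), map_one, map_zero]
  simp [add_mul, mul_add, Finset.sum_add_distrib, ite_mul, mul_ite,
    Finset.sum_ite_eq, Finset.sum_ite_eq']
  field_simp
  rw [sq, h2]
  ring

lemma onQubit_offdiag {n : ℕ} (i : Fin n) (M : Matrix (Fin 2) (Fin 2) ℂ)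
    (f g : Fin n → Fin 2) (k : Fin n) (hk : k ≠ i) (hfg : f k ≠ g k) :
    onQubit n i M f g = 0 := by
  unfold onQubit
  simp only [Matrix.of_apply]
  rw [Finset.prod_eq_zero (Finset.mem_erase.mpr ⟨hk, Finset.mem_univ k⟩) (by simp [hfg])]
  ring

lemma exists_third {n : ℕ} (hn : 3 ≤ n) (i j : Fin n) :
    ∃ k : Fin n, k ≠ i ∧ k ≠ j := by
  by_contra h
  push_neg at h
  have : (Finset.univ : Finset (Fin n)) ⊆ {i, j} := by
    intro k _
    by_cases hk : k = i
    · simp [hk]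
    · simp [h k hk]
  have := Finset.card_le_card this
  simp at this
  have hle : ({i, j} : Finset (Fin n)).card ≤ 2 := Finset.card_insert_le _ _ |>.trans (by simp)
  omega

lemma mul_offdiag {n : ℕ} (hn : 3 ≤ n) (i j : Fin n) (P Q : Matrix (Fin 2) (Fin 2) ℂ)
    (f g : Fin n → Fin 2) (hf : ∀ k, f k ≠ g k) :
    (onQubit n i P * onQubit n j Q) f g = 0 := by
  obtain ⟨k, hki, hkj⟩ := exists_third hn i j
  rw [Matrix.mul_apply]
  apply Finset.sum_eq_zero
  intro h _
  by_cases hh : f k = h k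
  · rw [onQubit_offdiag j Q h g k hkj (hh ▸ hf k), mul_zero]
  · rw [onQubit_offdiag i P f h k hki hh, zero_mul]


/-- Theorem: the GHZ state and the classical mixture `ρ_cl` give the same expectation value
to every one-body operator `P⁽ⁱ⁾` and every two-body operator `P⁽ⁱ⁾Q⁽ʲ⁾` with `i ≠ j`. -/
theorem stmt_19 (n : ℕ) (hn : 3 ≤ n) (i j : Fin n) (hij : i ≠ j)
    (P Q : Matrix (Fin 2) (Fin 2) ℂ) :
    braket (ghz n) (onQubit n i P) (ghz n) = Matrix.trace (rhoCl n * onQubit n i P)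
    ∧ braket (ghz n) (onQubit n i P * onQubit n j Q) (ghz n)
      = Matrix.trace (rhoCl n * (onQubit n i P * onQubit n j Q)) := by
  have hne : ∀ k : Fin n, (fun _ : Fin n => (0 : Fin 2)) k ≠ (fun _ => 1) k := by
    intro k; simp
  have hne' : ∀ k : Fin n, (fun _ : Fin n => (1 : Fin 2)) k ≠ (fun _ => 0) k := by
    intro k; simp [Fin.ext_iff]
  constructor
  · rw [braket_ghz, trace_rhoCl,
      onQubit_offdiag i P (fun _ => 0) (fun _ => 1) j hij.symm (hne j),
      onQubit_offdiag i P (fun _ => 1) (fun _ => 0) j hij.symm (hne' j)]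
    ring
  · rw [braket_ghz, trace_rhoCl,
      mul_offdiag hn i j P Q (fun _ => 0) (fun _ => 1) hne,
      mul_offdiag hn i j P Q (fun _ => 1) (fun _ => 0) hne']
    ring
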